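/- Let C be a preadditive category that is ℚ-linear (each Hom-group is a ℚ-vector space and composition is ℚ-bilinear). Let X and B be objects of C, let h : X → X, u : B → X and v : X → B be morphisms, let e : B → B be an idempotent endomorphism (e∘e = e), let m ≥ 0 be an integer and let n be a nonzero rational number. Assume v∘hᵐ∘u = n·id_B and v∘hˡ∘u = 0 for every integer l with 0 ≤ l < m, where hˡ denotes the l-fold composite of h and composites are read right-to-left. For 0 ≤ i ≤ m define πᵢ := n⁻¹·(h^(m−i) ∘ u ∘ e ∘ v ∘ hⁱ) : X → X. Then πᵢ∘πᵢ = πᵢ for every i, and πᵢ∘πⱼ = 0 whenever i < j. -/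
import Mathlib


open CategoryTheory

/-- The `l`-fold composite `hˡ` of an endomorphism `h` (with `h⁰ = 𝟙`). -/
def cpow {C : Type*} [Category C] {X : C} (h : X ⟶ X) : ℕ → (X ⟶ X)
  | 0 => 𝟙 X
  | l + 1 => cpow h l ≫ h

lemma cpow_add_assoc {C : Type*} [Category C] {X Y : C} (h : X ⟶ X) (a b : ℕ)
    (g : X ⟶ Y) : cpow h a ≫ cpow h b ≫ g = cpow h (a + b) ≫ g := by
  induction b generalizing g with
  | zero => simp [cpow]
  | succ b ih =>
    simp only [cpow, Category.assoc]
    rw [ih (h ≫ g)]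
    rfl

/-- Steps 2–3 of the proof of Theorem `Murrequadrics`, abstractly: in a ℚ-linear
preadditive category, given `h : X ⟶ X`, `u : B ⟶ X`, `v : X ⟶ B`, an idempotent
`e : B ⟶ B`, and a nonzero rational `n` with `v∘hᵐ∘u = n·id_B` and `v∘hˡ∘u = 0` for
`0 ≤ l < m`, the morphisms `πᵢ := n⁻¹·(h^(m−i)∘u∘e∘v∘hⁱ) : X ⟶ X` (`0 ≤ i ≤ m`) are
idempotent and satisfy `πᵢ∘πⱼ = 0` whenever `i < j` (composites read right-to-left). -/
theorem stmt_7 {C : Type*} [Category C] [Preadditive C] [Linear ℚ C]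
    {X B : C} (h : X ⟶ X) (u : B ⟶ X) (v : X ⟶ B) (e : B ⟶ B)
    (he : e ≫ e = e) (m : ℕ) (n : ℚ) (hn : n ≠ 0)
    (hm : u ≫ cpow h m ≫ v = n • 𝟙 B)
    (hl : ∀ l : ℕ, l < m → u ≫ cpow h l ≫ v = 0)
    (π : ℕ → (X ⟶ X))
    (hπ : ∀ i, π i = n⁻¹ • (cpow h i ≫ v ≫ e ≫ u ≫ cpow h (m - i))) :
    (∀ i, i ≤ m → π i ≫ π i = π i) ∧
    (∀ i j, i ≤ m → j ≤ m → i < j → π j ≫ π i = 0) := by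
  have key : ∀ a b c d : ℕ,
      π a ≫ π c = (n⁻¹ * n⁻¹) •
        (cpow h a ≫ v ≫ e ≫ (u ≫ cpow h ((m - a) + c) ≫ v) ≫ e ≫ u ≫ cpow h (m - c)) := by
    intro a b c d
    rw [hπ a, hπ c]
    simp only [Linear.smul_comp, Linear.comp_smul, smul_smul, Category.assoc]
    rw [← cpow_add_assoc h (m - a) c]
  constructor
  · intro i hi
    rw [key i 0 i 0, Nat.sub_add_cancel hi, hm]
    simp only [Linear.smul_comp, Linear.comp_smul, Category.id_comp, smul_smul]
    rw [← Category.assoc e e, he]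
    rw [hπ i]
    congr 1
    field_simp
  · intro i j hi hj hij
    rw [key j 0 i 0, hl _ (by omega)]
    simp
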